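/- Let A and Y be nonempty compact subsets of ℝ^n with A ⊆ Y and ∂Y ⊆ A + B(0, ε) for some ε ≥ 0 (i.e., every boundary point of Y is within distance ε of A). Then the Hausdorff distance between the convex hull of Y and the convex hull of A is at most ε. -/

import Mathlib

open Metric Pointwise

lemma subset_convexHull_frontier {E : Type*} [NormedAddCommGroup E] [NormedSpace ℝ E]
    [Nontrivial E] {Y : Set E} (hY : IsCompact Y) : Y ⊆ convexHull ℝ (frontier Y) := by
  intro y hy
  obtain ⟨v, hv⟩ := exists_ne (0 : E)
  set f : ℝ → E := fun t => y + t • v with hf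
  have hfc : Continuous f := by continuity
  set T := f ⁻¹' Y with hT
  have h0T : (0 : ℝ) ∈ T := by simp [hT, hf, hy]
  have hTne : T.Nonempty := ⟨0, h0T⟩
  have hTc : IsCompact T := by
    obtain ⟨R, hR⟩ := hY.isBounded.subset_closedBall 0
    have hbd : Bornology.IsBounded T := by
      have : T ⊆ Set.Icc (-((R + ‖y‖) / ‖v‖)) ((R + ‖y‖) / ‖v‖) := by
        intro t ht
        have h1 : ‖y + t • v‖ ≤ R := by
          simpa [dist_eq_norm] using hR ht
        have h2 : ‖t • v‖ ≤ R + ‖y‖ := by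
          have h3 := norm_sub_le (y + t • v) y
          simp only [add_sub_cancel_left] at h3
          linarith
        rw [norm_smul, Real.norm_eq_abs] at h2
        have hv' : 0 < ‖v‖ := norm_pos_iff.mpr hv
        have : |t| ≤ (R + ‖y‖) / ‖v‖ := by
          rw [le_div_iff₀ hv']; linarith
        exact abs_le.mp this
      exact (Metric.isBounded_Icc _ _).subset this
    exact Metric.isCompact_of_isClosed_isBounded (hY.isClosed.preimage hfc) hbd
  set a := sSup T with ha
  set b := sInf T with hb
  have haT : a ∈ T := hTc.sSup_mem hTne
  have hbT : b ∈ T := hTc.sInf_mem hTne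
  have h0a : (0 : ℝ) ≤ a := le_csSup hTc.isBounded.bddAbove h0T
  have hb0 : b ≤ (0 : ℝ) := csInf_le hTc.isBounded.bddBelow h0T
  have hfa : f a ∈ frontier Y := by
    rw [hY.isClosed.frontier_eq]
    refine ⟨haT, fun hop => ?_⟩
    have : IsOpen (f ⁻¹' interior Y) := isOpen_interior.preimage hfc
    obtain ⟨δ, hδ, hball⟩ := Metric.isOpen_iff.mp this a hop
    have : a + δ / 2 ∈ T := by
      have hm : a + δ / 2 ∈ Metric.ball a δ := by
        rw [mem_ball, Real.dist_eq, add_sub_cancel_left, abs_of_pos (by linarith)]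
        linarith
      show f (a + δ / 2) ∈ Y
      exact interior_subset (hball hm)
    have := le_csSup hTc.isBounded.bddAbove this
    linarith
  have hfb : f b ∈ frontier Y := by
    rw [hY.isClosed.frontier_eq]
    refine ⟨hbT, fun hop => ?_⟩
    have : IsOpen (f ⁻¹' interior Y) := isOpen_interior.preimage hfc
    obtain ⟨δ, hδ, hball⟩ := Metric.isOpen_iff.mp this b hop
    have : b - δ / 2 ∈ T := by
      have hm : b - δ / 2 ∈ Metric.ball b δ := by
        rw [mem_ball, Real.dist_eq, sub_sub_cancel_left, abs_neg, abs_of_pos (by linarith)]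
        linarith
      show f (b - δ / 2) ∈ Y
      exact interior_subset (hball hm)
    have := csInf_le hTc.isBounded.bddBelow this
    linarith
  -- y = f 0 lies on the segment from f b to f a
  have hseg : y ∈ segment ℝ (f b) (f a) := by
    have hba : b ≤ a := hb0.trans h0a
    have h0 : (0 : ℝ) ∈ segment ℝ b a := by
      rw [segment_eq_Icc hba]; exact ⟨hb0, h0a⟩
    have : f 0 ∈ f '' segment ℝ b a := ⟨0, h0, rfl⟩
    have him : f '' segment ℝ b a = segment ℝ (f b) (f a) := by
      have heq : f = fun t => (AffineMap.lineMap y (y + v) : ℝ →ᵃ[ℝ] E) t := by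
        funext t
        simp [hf, AffineMap.lineMap_apply]
        abel
      rw [heq]
      exact image_segment ℝ (AffineMap.lineMap y (y + v)) b a
    rw [him] at this
    simpa [hf] using this
  exact (convex_convexHull ℝ (frontier Y)).segment_subset
    (subset_convexHull ℝ _ hfb) (subset_convexHull ℝ _ hfa) hseg

/-- If `A ⊆ Y` are nonempty compact subsets of `ℝ^n` with `∂Y ⊆ A + B(0, ε)` for some
`ε ≥ 0`, then the Hausdorff distance between the convex hulls of `Y` and `A` is at most `ε`. -/
theorem stmt1 (n : ℕ) (ε : ℝ) (hε : 0 ≤ ε) (A Y : Set (EuclideanSpace ℝ (Fin n)))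
    (hAne : A.Nonempty) (hYne : Y.Nonempty) (hAc : IsCompact A) (hYc : IsCompact Y)
    (hAY : A ⊆ Y) (hcov : frontier Y ⊆ A + closedBall (0 : EuclideanSpace ℝ (Fin n)) ε) :
    hausdorffDist (convexHull ℝ Y) (convexHull ℝ A) ≤ ε := by
  rcases Nat.eq_zero_or_pos n with hn | hn
  · subst hn
    haveI : Subsingleton (EuclideanSpace ℝ (Fin 0)) := by
      constructor; intro x y; ext i; exact absurd i.2 (by omega)
    have hYA : Y ⊆ A := by
      intro y hy
      obtain ⟨a, ha⟩ := hAne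
      rwa [Subsingleton.elim y a]
    have : Y = A := Set.Subset.antisymm hYA hAY
    rw [this, hausdorffDist_self_zero]
    exact hε
  · haveI : Nontrivial (EuclideanSpace ℝ (Fin n)) := by
      refine ⟨EuclideanSpace.single ⟨0, hn⟩ 1, 0, ?_⟩
      intro h
      have := congrArg (fun z : EuclideanSpace ℝ (Fin n) => z ⟨0, hn⟩) h
      simp [EuclideanSpace.single] at this
    set C := convexHull ℝ A + closedBall (0 : EuclideanSpace ℝ (Fin n)) ε with hC
    have hCconv : Convex ℝ C := (convex_convexHull ℝ A).add (convex_closedBall 0 ε)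
    have hFC : frontier Y ⊆ C := by
      refine hcov.trans ?_
      exact Set.add_subset_add_right (subset_convexHull ℝ A)
    have hYC : convexHull ℝ Y ⊆ C := by
      apply convexHull_min ?_ hCconv
      intro y hy
      have := subset_convexHull_frontier hYc hy
      exact convexHull_min hFC hCconv this
    apply hausdorffDist_le_of_infDist hε
    · intro x hx
      obtain ⟨a, ha, b, hb, rfl⟩ := hYC hx
      calc infDist (a + b) (convexHull ℝ A) ≤ dist (a + b) a := infDist_le_dist_of_mem ha
        _ = ‖b‖ := by simp [dist_eq_norm]
        _ ≤ ε := by simpa using hb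
    · intro x hx
      have : x ∈ convexHull ℝ Y := convexHull_mono hAY hx
      calc infDist x (convexHull ℝ Y) = 0 := infDist_zero_of_mem this
        _ ≤ ε := hε
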